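/- Let N, M, q be positive integers with q^M ≡ 1 (mod N), and let G = C_N ⋊ C_M be the semidirect product generated by σ of order N and φ of order M with relation φσφ⁻¹ = σ^q. Let f be a positive even divisor of M and let H ≤ G be a subgroup contained in ⟨σ⟩·⟨φ^f⟩. If x = σ^i φ^j ∈ G satisfies HxH = Hx⁻¹H, then j ≡ 0 (mod f) or 2j ≡ f (mod 2f) would force j ≡ f/2 (mod f); that is, j mod f ∈ {0, f/2}. -/

import Mathlib

/-- In a semidirect product `G = ⟨σ⟩ ⋊ ⟨φ⟩` with `σ` of order `N`, `φ` of order `M`,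
`φσφ⁻¹ = σ^q` (`q^M ≡ 1 mod N`), with normal form `σ^i φ^j` (the `φ`-part well defined
mod `M`), and `H ≤ G` contained in `⟨σ⟩·⟨φ^f⟩` for an even divisor `f` of `M`:
if `H(σ^iφ^j)H = H(σ^iφ^j)⁻¹H` then `j mod f ∈ {0, f/2}`. -/
theorem stmt18 (N M q f : ℕ) (hN : 0 < N) (hM : 0 < M) (hq : q ^ M ≡ 1 [MOD N])
    (hf : 0 < f) (hfM : f ∣ M) (hfeven : Even f)
    {G : Type*} [Group G] (σ φ : G)
    (hσ : orderOf σ = N) (hφ : orderOf φ = M)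
    (hrel : φ * σ * φ⁻¹ = σ ^ q)
    (hgen : ∀ x : G, ∃ i j : ℕ, x = σ ^ i * φ ^ j)
    (hnf : ∀ i j i' j' : ℕ, σ ^ i * φ ^ j = σ ^ i' * φ ^ j' → j ≡ j' [MOD M])
    (H : Subgroup G) (hH : ∀ x ∈ H, ∃ i j : ℕ, x = σ ^ i * φ ^ (f * j)) :
    ∀ i j : ℕ,
      DoubleCoset.doubleCoset (σ ^ i * φ ^ j) (H : Set G) (H : Set G) =
        DoubleCoset.doubleCoset (σ ^ i * φ ^ j)⁻¹ (H : Set G) (H : Set G) →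
      j % f = 0 ∨ j % f = f / 2 := by
  -- the commutation rule `φ^k σ^m = σ^(m q^k) φ^k`
  have key : ∀ k m : ℕ, φ ^ k * σ ^ m = σ ^ (m * q ^ k) * φ ^ k := by
    intro k
    induction k with
    | zero => intro m; simp
    | succ n ih =>
      intro m
      have h1 : φ * σ ^ m = σ ^ (q * m) * φ := by
        have hc : (φ * σ * φ⁻¹) ^ m = φ * σ ^ m * φ⁻¹ := conj_pow
        rw [hrel, ← pow_mul] at hc
        have := hc.symm
        calc φ * σ ^ m = (φ * σ ^ m * φ⁻¹) * φ := by group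
          _ = σ ^ (q * m) * φ := by rw [← this]
      calc φ ^ (n + 1) * σ ^ m = φ ^ n * (φ * σ ^ m) := by
            rw [pow_succ]; group
        _ = φ ^ n * (σ ^ (q * m) * φ) := by rw [h1]
        _ = (φ ^ n * σ ^ (q * m)) * φ := by group
        _ = (σ ^ (q * m * q ^ n) * φ ^ n) * φ := by rw [ih]
        _ = σ ^ (m * q ^ (n + 1)) * φ ^ (n + 1) := by
            rw [mul_assoc, ← pow_succ]
            congr 1
            rw [pow_succ]
            ring
  -- product of two normal forms
  have mulnf : ∀ A B C D : ℕ,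
      (σ ^ A * φ ^ B) * (σ ^ C * φ ^ D) = σ ^ (A + C * q ^ B) * φ ^ (B + D) := by
    intro A B C D
    calc (σ ^ A * φ ^ B) * (σ ^ C * φ ^ D) = σ ^ A * (φ ^ B * σ ^ C) * φ ^ D := by group
      _ = σ ^ A * (σ ^ (C * q ^ B) * φ ^ B) * φ ^ D := by rw [key]
      _ = σ ^ (A + C * q ^ B) * φ ^ (B + D) := by rw [pow_add, pow_add]; group
  intro i j hdos
  set x : G := σ ^ i * φ ^ j with hxdef
  have hx : x⁻¹ ∈ DoubleCoset.doubleCoset x (H : Set G) (H : Set G) := by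
    rw [hdos]; exact DoubleCoset.mem_doubleCoset_self H H x⁻¹
  obtain ⟨h1, hh1, h2, hh2, heq⟩ := DoubleCoset.mem_doubleCoset.mp hx
  obtain ⟨a, b, hab⟩ := hH h1 hh1
  obtain ⟨c, d, hcd⟩ := hH h2 hh2
  obtain ⟨i', j', hx'⟩ := hgen x⁻¹
  -- normal form of h1 * x * h2
  have e1 : σ ^ i' * φ ^ j'
      = σ ^ ((a + i * q ^ (f * b)) + c * q ^ (f * b + j)) * φ ^ ((f * b + j) + f * d) := by
    rw [← hx', heq, hab, hcd, hxdef, mulnf, mulnf]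
  have hA : j' ≡ (f * b + j) + f * d [MOD M] := hnf _ _ _ _ e1
  -- from x * x⁻¹ = 1
  have e2 : σ ^ (i + i' * q ^ j) * φ ^ (j + j') = σ ^ 0 * φ ^ 0 := by
    rw [← mulnf, ← hxdef, ← hx']
    simp
  have hB : j + j' ≡ 0 [MOD M] := hnf _ _ _ _ e2
  have hC : j + ((f * b + j) + f * d) ≡ 0 [MOD M] :=
    (((Nat.ModEq.refl j).add hA).symm.trans hB)
  have hCf : j + ((f * b + j) + f * d) ≡ 0 [MOD f] := hC.of_dvd hfM
  have hdvd : f ∣ j + ((f * b + j) + f * d) := (Nat.modEq_zero_iff_dvd).mp hCf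
  have h2j : f ∣ 2 * j := by
    have h2 : f ∣ f * b + f * d := ⟨b + d, by ring⟩
    have hre : j + ((f * b + j) + f * d) = (f * b + f * d) + 2 * j := by ring
    rw [hre] at hdvd
    exact (Nat.dvd_add_right h2).mp hdvd
  have hmod : f ∣ 2 * (j % f) := by
    have h1 : (2 * (j % f)) ≡ 2 * j [MOD f] :=
      (Nat.mod_modEq j f).mul_left 2
    have h2 : (2 * j) ≡ 0 [MOD f] := (Nat.modEq_zero_iff_dvd).mpr h2j
    exact (Nat.modEq_zero_iff_dvd).mp (h1.trans h2)
  obtain ⟨k, hk⟩ := hmod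
  have hr : j % f < f := Nat.mod_lt _ hf
  have hk2 : k < 2 := by
    have : f * k < f * 2 := by omega
    exact Nat.lt_of_mul_lt_mul_left this
  obtain ⟨m, hm⟩ := hfeven
  interval_cases k <;> omega
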